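/- Let a ≤ b ≤ c be positive reals with c < a + b, and let C : ℝ² → Bool be a two-coloring with no monochromatic copy of T(a,b,c) such that the horizontal line y = 0 is entirely red. Suppose there exist integers n, m with n + m even and c − b ≤ an + bm ≤ a. Then the horizontal line y = c is entirely blue. -/

import Mathlib

noncomputable def distInf (p q : ℝ × ℝ) : ℝ := max |p.1 - q.1| |p.2 - q.2|

def IsCopy (a b c : ℝ) (z₁ z₂ z₃ : ℝ × ℝ) : Prop :=
  ({distInf z₁ z₂, distInf z₂ z₃, distInf z₃ z₁} : Multiset ℝ) = {a, b, c}

def NoMonoCopy (a b c : ℝ) (C : ℝ × ℝ → Bool) : Prop :=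
  ∀ z₁ z₂ z₃ : ℝ × ℝ, IsCopy a b c z₁ z₂ z₃ → ¬(C z₁ = C z₂ ∧ C z₂ = C z₃)

def IsPeriod (C : ℝ × ℝ → Bool) (v : ℝ × ℝ) : Prop := ∀ z : ℝ × ℝ, C (z + v) = C z

def IsAntiPeriod (C : ℝ × ℝ → Bool) (v : ℝ × ℝ) : Prop := ∀ z : ℝ × ℝ, C (z + v) ≠ C z

def MonoSeg (C : ℝ × ℝ → Bool) (L : ℝ) : Prop :=
  ∃ x₀ y₀ : ℝ, (∀ t ∈ Set.Icc (0:ℝ) L, C (x₀ + t, y₀) = C (x₀, y₀)) ∨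
               (∀ t ∈ Set.Icc (0:ℝ) L, C (x₀, y₀ + t) = C (x₀, y₀))

lemma bool_eq_not_of_ne {x y : Bool} (h : ¬ x = y) : x = !y := by
  cases x <;> cases y <;> simp_all

lemma bool_eq_of_ne_not {x y : Bool} (h : ¬ x = !y) : x = y := by
  cases x <;> cases y <;> simp_all

theorem stmt14 (a b c : ℝ) (ha : 0 < a) (hab : a ≤ b) (hbc : b ≤ c) (htri : c < a + b)
    (C : ℝ × ℝ → Bool) (hmono : NoMonoCopy a b c C) (red : Bool)
    (hline : ∀ x : ℝ, C (x, 0) = red)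
    (n m : ℤ) (heven : Even (n + m)) (h₁ : c - b ≤ a * n + b * m) (h₂ : a * n + b * m ≤ a) :
    ∀ x : ℝ, C (x, c) = !red := by
  have hb : 0 < b := lt_of_lt_of_le ha hab
  have hc : 0 < c := lt_of_lt_of_le hb hbc
  have habs_a : |a| = a := abs_of_pos ha
  have habs_b : |b| = b := abs_of_pos hb
  have habs_na : |(-a)| = a := by rw [abs_neg]; exact habs_a
  have habs_nb : |(-b)| = b := by rw [abs_neg]; exact habs_b
  have perm1 : ({c, b, a} : Multiset ℝ) = {a, b, c} := by
    show c ::ₘ b ::ₘ a ::ₘ 0 = a ::ₘ b ::ₘ c ::ₘ 0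
    rw [Multiset.cons_swap b a, Multiset.cons_swap c a, Multiset.cons_swap c b]
  have perm2 : ({a, c, b} : Multiset ℝ) = {a, b, c} := by
    show a ::ₘ c ::ₘ b ::ₘ 0 = a ::ₘ b ::ₘ c ::ₘ 0
    rw [Multiset.cons_swap c b]
  have perm3 : ({b, a, c} : Multiset ℝ) = {a, b, c} := by
    show b ::ₘ a ::ₘ c ::ₘ 0 = a ::ₘ b ::ₘ c ::ₘ 0
    rw [Multiset.cons_swap b a]
  have force : ∀ (z₁ z₂ z₃ : ℝ × ℝ) (κ : Bool), IsCopy a b c z₁ z₂ z₃ →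
      C z₁ = κ → C z₂ = κ → C z₃ = !κ := by
    intro z₁ z₂ z₃ κ hcopy h1 h2
    have h := hmono z₁ z₂ z₃ hcopy
    exact bool_eq_not_of_ne fun hk => h ⟨h1.trans h2.symm, h2.trans hk.symm⟩
  -- the key step lemma: a monochromatic horizontal line forces the lines at
  -- vertical distance a and b to be of the opposite color
  have step : ∀ (h : ℝ) (κ : Bool), (∀ x, C (x, h) = κ) → ∀ e : ℝ,
      ((|e| = a → ∀ x, C (x, h + e) = !κ) ∧ (|e| = b → ∀ x, C (x, h + e) = !κ)) := by
    intro h κ hκ e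
    constructor
    · intro he x
      have d1 : distInf (x - (c - b), h) (x + b, h) = c := by
        show max |x - (c - b) - (x + b)| |h - h| = c
        rw [show x - (c - b) - (x + b) = -c by ring, sub_self, abs_neg, abs_zero,
          abs_of_pos hc]
        exact max_eq_left hc.le
      have d2 : distInf (x + b, h) (x, h + e) = b := by
        show max |x + b - x| |h - (h + e)| = b
        rw [show x + b - x = b by ring, show h - (h + e) = -e by ring, abs_neg, he,
          abs_of_pos hb]
        exact max_eq_left hab
      have d3 : distInf (x, h + e) (x - (c - b), h) = a := by
        show max |x - (x - (c - b))| |h + e - h| = a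
        rw [show x - (x - (c - b)) = c - b by ring, show h + e - h = e by ring, he,
          abs_of_nonneg (by linarith : (0:ℝ) ≤ c - b)]
        exact max_eq_right (by linarith)
      apply force (x - (c - b), h) (x + b, h) (x, h + e) κ _ (hκ _) (hκ _)
      unfold IsCopy
      rw [d1, d2, d3]
      exact perm1
    · intro he x
      have d1 : distInf (x + (c - a), h) (x + c, h) = a := by
        show max |x + (c - a) - (x + c)| |h - h| = a
        rw [show x + (c - a) - (x + c) = -a by ring, sub_self, abs_neg, abs_zero,
          abs_of_pos ha]
        exact max_eq_left ha.le
      have d2 : distInf (x + c, h) (x, h + e) = c := by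
        show max |x + c - x| |h - (h + e)| = c
        rw [show x + c - x = c by ring, show h - (h + e) = -e by ring, abs_neg, he,
          abs_of_pos hc]
        exact max_eq_left hbc
      have d3 : distInf (x, h + e) (x + (c - a), h) = b := by
        show max |x - (x + (c - a))| |h + e - h| = b
        rw [show x - (x + (c - a)) = -(c - a) by ring, show h + e - h = e by ring, he,
          abs_neg, abs_of_nonneg (by linarith : (0:ℝ) ≤ c - a)]
        exact max_eq_right (by linarith)
      apply force (x + (c - a), h) (x + c, h) (x, h + e) κ _ (hκ _) (hκ _)
      unfold IsCopy
      rw [d1, d2, d3]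
      exact perm2
  have flip : ∀ j k : ℤ, (Even j ↔ ¬ Even k) →
      (!(if Even k then red else !red)) = (if Even j then red else !red) := by
    intro j k hjk
    by_cases h : Even k
    · simp [h, hjk, Bool.not_not]
    · simp [h, hjk.mpr h]
  have key : ∀ n' m' : ℤ, ∀ x : ℝ,
      C (x, a * n' + b * m') = (if Even (n' + m') then red else !red) := by
    intro n'
    induction n' using Int.induction_on with
    | zero =>
      intro m'
      induction m' using Int.induction_on with
      | zero => intro x; simpa using hline x
      | succ k ih =>
        intro x
        have h1 := (step _ _ ih b).2 habs_b x
        rw [← flip ((0:ℤ) + ((k:ℤ) + 1)) ((0:ℤ) + (k:ℤ))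
          (by rw [zero_add, zero_add]; exact Int.even_add_one), ← h1]
        congr 2
        push_cast
        ring
      | pred k ih =>
        intro x
        have h1 := (step _ _ ih (-b)).2 habs_nb x
        rw [← flip ((0:ℤ) + (-(k:ℤ) - 1)) ((0:ℤ) + -(k:ℤ))
          (by rw [zero_add, zero_add]; exact Int.even_sub_one), ← h1]
        congr 2
        push_cast
        ring
    | succ k ih =>
      intro m' x
      have h1 := (step _ _ (ih m') a).1 habs_a x
      rw [← flip (((k:ℤ) + 1) + m') ((k:ℤ) + m')
        (by rw [show (k:ℤ) + 1 + m' = (k + m') + 1 by ring]; exact Int.even_add_one), ← h1]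
      congr 2
      push_cast
      ring
    | pred k ih =>
      intro m' x
      have h1 := (step _ _ (ih m') (-a)).1 habs_na x
      rw [← flip ((-(k:ℤ) - 1) + m') (-(k:ℤ) + m')
        (by rw [show -(k:ℤ) - 1 + m' = (-(k:ℤ) + m') - 1 by ring]; exact Int.even_sub_one), ← h1]
      congr 2
      push_cast
      ring
  -- the line y = a*n + b*m is red
  have hlineS : ∀ y : ℝ, C (y, a * n + b * m) = red := by
    intro y
    rw [key n m y, if_pos heven]
  intro x
  by_contra hx
  have hx' : C (x, c) = red := bool_eq_of_ne_not hx
  have d1 : distInf (x, c) (x + b, a * n + b * m) = b := by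
    show max |x - (x + b)| |c - (a * ↑n + b * ↑m)| = b
    rw [show x - (x + b) = -b by ring, abs_neg, abs_of_pos hb,
      abs_of_nonneg (by linarith : (0:ℝ) ≤ c - (a * ↑n + b * ↑m))]
    exact max_eq_left (by linarith)
  have d2 : distInf (x + b, a * n + b * m) (x + b - a, 0) = a := by
    show max |x + b - (x + b - a)| |a * ↑n + b * ↑m - 0| = a
    rw [show x + b - (x + b - a) = a by ring, sub_zero, abs_of_pos ha,
      abs_of_nonneg (by linarith : (0:ℝ) ≤ a * ↑n + b * ↑m)]
    exact max_eq_left h₂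
  have d3 : distInf (x + b - a, 0) (x, c) = c := by
    show max |x + b - a - x| |(0:ℝ) - c| = c
    rw [show x + b - a - x = b - a by ring, zero_sub, abs_neg, abs_of_pos hc,
      abs_of_nonneg (by linarith : (0:ℝ) ≤ b - a)]
    exact max_eq_right (by linarith)
  have copy : IsCopy a b c (x, c) (x + b, a * n + b * m) (x + b - a, 0) := by
    unfold IsCopy
    rw [d1, d2, d3]
    exact perm3
  exact hmono _ _ _ copy ⟨hx'.trans (hlineS _).symm, (hlineS _).trans (hline _).symm⟩
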